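/- Weak forcing is invariant under elementary extension: defining A ⊩* ψ(ā) as A ⊩ ¬¬ψ(ā), if A ⪯ B then for any infinitary formula ψ and ā ∈ A, A ⊩* ψ(ā) if and only if B ⊩* ψ(ā). -/

import Mathlib

open FirstOrder

universe u

namespace InfinitaryForcing

variable (L : FirstOrder.Language.{u, u})

/-- Infinitary formulas of `L_{∞,ω}`: set-indexed conjunctions and disjunctions,
finitary quantification, free variables among `Fin n`. -/
inductive InfForm : ℕ → Type (u + 1)
  | equal {n : ℕ} (t₁ t₂ : L.Term (Fin n)) : InfForm n
  | rel {n l : ℕ} (R : L.Relations l) (ts : Fin l → L.Term (Fin n)) : InfForm n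
  | not {n : ℕ} (φ : InfForm n) : InfForm n
  | disj {n : ℕ} {ι : Type u} (Φ : ι → InfForm n) : InfForm n
  | conj {n : ℕ} {ι : Type u} (Φ : ι → InfForm n) : InfForm n
  | ex {n : ℕ} (φ : InfForm (n + 1)) : InfForm n
  | all {n : ℕ} (φ : InfForm (n + 1)) : InfForm n

variable {L}

/-- Tarskian satisfaction for infinitary formulas. -/
def Realize : ∀ {n : ℕ}, InfForm L n → ∀ (M : Type u), L.Structure M → (Fin n → M) → Prop
  | _, .equal t₁ t₂, _M, S, v => letI := S; t₁.realize v = t₂.realize v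
  | _, .rel R ts, _M, S, v => letI := S; Language.Structure.RelMap R fun i => (ts i).realize v
  | _, .not φ, M, S, v => ¬ Realize φ M S v
  | _, .disj Φ, M, S, v => ∃ i, Realize (Φ i) M S v
  | _, .conj Φ, M, S, v => ∀ i, Realize (Φ i) M S v
  | _, .ex φ, M, S, v => ∃ b : M, Realize φ M S (Fin.snoc v b)
  | _, .all φ, M, S, v => ∀ b : M, Realize φ M S (Fin.snoc v b)

/-- Elementary embeddings, with the structures made explicit. -/
abbrev ElemEmb (M N : Type u) (SM : L.Structure M) (SN : L.Structure N) : Type u :=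
  @FirstOrder.Language.ElementaryEmbedding L M N SM SN

/-- The strong forcing relation `A ⊩ ψ(ā)`, where conditions are structures
ordered by elementary extension. -/
def Forces : ∀ {n : ℕ}, InfForm L n → ∀ (M : Type u), L.Structure M → (Fin n → M) → Prop
  | _, .equal t₁ t₂, _M, S, v => letI := S; t₁.realize v = t₂.realize v
  | _, .rel R ts, _M, S, v => letI := S; Language.Structure.RelMap R fun i => (ts i).realize v
  | _, .not φ, M, S, v =>
      ∀ (N : Type u) (SN : L.Structure N) (f : ElemEmb M N S SN),
        ¬ Forces φ N SN (fun i => f.toFun (v i))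
  | _, .disj Φ, M, S, v => ∃ i, Forces (Φ i) M S v
  | _, .conj Φ, M, S, v =>
      ∀ (N : Type u) (SN : L.Structure N) (f : ElemEmb M N S SN) (i : _),
        ∃ (P : Type u) (SP : L.Structure P) (g : ElemEmb N P SN SP),
          Forces (Φ i) P SP (fun k => g.toFun (f.toFun (v k)))
  | _, .ex φ, M, S, v => ∃ b : M, Forces φ M S (Fin.snoc v b)
  | _, .all φ, M, S, v =>
      ∀ (N : Type u) (SN : L.Structure N) (f : ElemEmb M N S SN) (b : N),
        ∃ (P : Type u) (SP : L.Structure P) (g : ElemEmb N P SN SP),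
          Forces φ P SP (Fin.snoc (fun k => g.toFun (f.toFun (v k))) (g.toFun b))

/-- `M` decides `ψ(v)` if it strongly forces `ψ(v)` or `¬ψ(v)`. -/
def Decides {n : ℕ} (ψ : InfForm L n) (M : Type u) (S : L.Structure M) (v : Fin n → M) : Prop :=
  Forces ψ M S v ∨ Forces ψ.not M S v

/-- The weak forcing relation `A ⊩* ψ := A ⊩ ¬¬ψ`. -/
def WForces {n : ℕ} (ψ : InfForm L n) (M : Type u) (S : L.Structure M) (v : Fin n → M) : Prop :=
  Forces ψ.not.not M S v

variable (L)

/-- Finitary (`L_{ω,ω}`) formulas among the infinitary ones. -/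
inductive InfForm.IsFinitary : ∀ {n : ℕ}, InfForm L n → Prop
  | equal {n} (t₁ t₂ : L.Term (Fin n)) : IsFinitary (.equal t₁ t₂)
  | rel {n l} (R : L.Relations l) (ts : Fin l → L.Term (Fin n)) : IsFinitary (.rel R ts)
  | not {n} {φ : InfForm L n} : IsFinitary φ → IsFinitary φ.not
  | disj {n} {ι : Type u} (_ : Finite ι) {Φ : ι → InfForm L n} :
      (∀ i, IsFinitary (Φ i)) → IsFinitary (.disj Φ)
  | conj {n} {ι : Type u} (_ : Finite ι) {Φ : ι → InfForm L n} :
      (∀ i, IsFinitary (Φ i)) → IsFinitary (.conj Φ)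
  | ex {n} {φ : InfForm L (n + 1)} : IsFinitary φ → IsFinitary φ.ex
  | all {n} {φ : InfForm L (n + 1)} : IsFinitary φ → IsFinitary φ.all

/-- Quantifier-free infinitary formulas. -/
inductive InfForm.IsQF : ∀ {n : ℕ}, InfForm L n → Prop
  | equal {n} (t₁ t₂ : L.Term (Fin n)) : IsQF (.equal t₁ t₂)
  | rel {n l} (R : L.Relations l) (ts : Fin l → L.Term (Fin n)) : IsQF (.rel R ts)
  | not {n} {φ : InfForm L n} : IsQF φ → IsQF φ.not
  | disj {n} {ι : Type u} {Φ : ι → InfForm L n} : (∀ i, IsQF (Φ i)) → IsQF (.disj Φ)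
  | conj {n} {ι : Type u} {Φ : ι → InfForm L n} : (∀ i, IsQF (Φ i)) → IsQF (.conj Φ)

/-- `L_{ω₁,ω}` formulas: all conjunctions and disjunctions are countable. -/
inductive InfForm.IsCtble : ∀ {n : ℕ}, InfForm L n → Prop
  | equal {n} (t₁ t₂ : L.Term (Fin n)) : IsCtble (.equal t₁ t₂)
  | rel {n l} (R : L.Relations l) (ts : Fin l → L.Term (Fin n)) : IsCtble (.rel R ts)
  | not {n} {φ : InfForm L n} : IsCtble φ → IsCtble φ.not
  | disj {n} {ι : Type u} (_ : Countable ι) {Φ : ι → InfForm L n} :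
      (∀ i, IsCtble (Φ i)) → IsCtble (.disj Φ)
  | conj {n} {ι : Type u} (_ : Countable ι) {Φ : ι → InfForm L n} :
      (∀ i, IsCtble (Φ i)) → IsCtble (.conj Φ)
  | ex {n} {φ : InfForm L (n + 1)} : IsCtble φ → IsCtble φ.ex
  | all {n} {φ : InfForm L (n + 1)} : IsCtble φ → IsCtble φ.all

/-- A fragment of `L_{∞,ω}`: a family of sets of formulas closed under negation
and subformulas. -/
structure IsFragment (𝔸 : ∀ n : ℕ, Set (InfForm L n)) : Prop where
  not_mem : ∀ {n} {φ : InfForm L n}, φ ∈ 𝔸 n → φ.not ∈ 𝔸 n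
  of_not : ∀ {n} {φ : InfForm L n}, φ.not ∈ 𝔸 n → φ ∈ 𝔸 n
  of_disj : ∀ {n} {ι : Type u} {Φ : ι → InfForm L n}, InfForm.disj Φ ∈ 𝔸 n → ∀ i, Φ i ∈ 𝔸 n
  of_conj : ∀ {n} {ι : Type u} {Φ : ι → InfForm L n}, InfForm.conj Φ ∈ 𝔸 n → ∀ i, Φ i ∈ 𝔸 n
  of_ex : ∀ {n} {φ : InfForm L (n + 1)}, φ.ex ∈ 𝔸 n → φ ∈ 𝔸 (n + 1)
  of_all : ∀ {n} {φ : InfForm L (n + 1)}, φ.all ∈ 𝔸 n → φ ∈ 𝔸 (n + 1)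

variable {L}

/-- `G` is `𝔸`-generic if it decides every instance of every formula of `𝔸`. -/
def IsGeneric (𝔸 : ∀ n : ℕ, Set (InfForm L n)) (G : Type u) (SG : L.Structure G) : Prop :=
  ∀ (n : ℕ) (ψ : InfForm L n), ψ ∈ 𝔸 n → ∀ v : Fin n → G, Decides ψ G SG v

variable (L)

mutual
  /-- Finitary `∃ₙ` formulas: `n` alternating blocks of quantifiers beginning
  with existentials, counting finite conjunctions/disjunctions as free. -/
  inductive IsEx : ℕ → ∀ {k : ℕ}, InfForm L k → Prop
    | equal {m k} (t₁ t₂ : L.Term (Fin k)) : IsEx m (.equal t₁ t₂)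
    | rel {m k l} (R : L.Relations l) (ts : Fin l → L.Term (Fin k)) : IsEx m (.rel R ts)
    | not {m k} {φ : InfForm L k} : IsAll m φ → IsEx m φ.not
    | disj {m k} {ι : Type u} (_ : Finite ι) {Φ : ι → InfForm L k} :
        (∀ i, IsEx m (Φ i)) → IsEx m (.disj Φ)
    | conj {m k} {ι : Type u} (_ : Finite ι) {Φ : ι → InfForm L k} :
        (∀ i, IsEx m (Φ i)) → IsEx m (.conj Φ)
    | ex {m k} {φ : InfForm L (k + 1)} : IsEx m φ → 1 ≤ m → IsEx m φ.ex
    | exStep {m k} {φ : InfForm L (k + 1)} : IsAll m φ → IsEx (m + 1) φ.ex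

  /-- Finitary `∀ₙ` formulas. -/
  inductive IsAll : ℕ → ∀ {k : ℕ}, InfForm L k → Prop
    | equal {m k} (t₁ t₂ : L.Term (Fin k)) : IsAll m (.equal t₁ t₂)
    | rel {m k l} (R : L.Relations l) (ts : Fin l → L.Term (Fin k)) : IsAll m (.rel R ts)
    | not {m k} {φ : InfForm L k} : IsEx m φ → IsAll m φ.not
    | disj {m k} {ι : Type u} (_ : Finite ι) {Φ : ι → InfForm L k} :
        (∀ i, IsAll m (Φ i)) → IsAll m (.disj Φ)
    | conj {m k} {ι : Type u} (_ : Finite ι) {Φ : ι → InfForm L k} :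
        (∀ i, IsAll m (Φ i)) → IsAll m (.conj Φ)
    | all {m k} {φ : InfForm L (k + 1)} : IsAll m φ → 1 ≤ m → IsAll m φ.all
    | allStep {m k} {φ : InfForm L (k + 1)} : IsEx m φ → IsAll (m + 1) φ.all
end

/-- `f : A → B` is an `n`-elementary map (`A ⪯ₙ B` when `f` is an inclusion):
every finitary `∃ₙ` or `∀ₙ` formula transfers along `f`. -/
def IsNElemMap (n : ℕ) {A B : Type u} (SA : L.Structure A) (SB : L.Structure B)
    (f : A → B) : Prop :=
  ∀ (k : ℕ) (φ : InfForm L k), (IsEx L n φ ∨ IsAll L n φ) →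
    ∀ v : Fin k → A, Realize φ A SA v ↔ Realize φ B SB (fun i => f (v i))

/-- `f : A → B` is an elementary map: every finitary formula transfers along `f`. -/
def IsElemMap {A B : Type u} (SA : L.Structure A) (SB : L.Structure B)
    (f : A → B) : Prop :=
  ∀ (k : ℕ) (φ : InfForm L k), InfForm.IsFinitary L φ →
    ∀ v : Fin k → A, Realize φ A SA v ↔ Realize φ B SB (fun i => f (v i))

section Aux

open FirstOrder.Language

variable {L : FirstOrder.Language.{u, u}}

/-- Strong forcing is persistent: it transfers up along elementary embeddings. -/
lemma forces_persist : ∀ {n : ℕ} (φ : InfForm L n) {M N : Type u} (SM : L.Structure M)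
      (SN : L.Structure N) (f : ElemEmb M N SM SN) (v : Fin n → M),
      Forces φ M SM v → Forces φ N SN (fun i => f.toFun (v i))
  | _, .equal t₁ t₂, M, N, SM, SN, f, v, h => by
      letI := SM; letI := SN
      show Term.realize _ t₁ = Term.realize _ t₂
      have h1 : (fun i => f.toFun (v i)) = (⇑f ∘ v) := rfl
      rw [h1, HomClass.realize_term, HomClass.realize_term]
      exact congrArg _ h
  | _, .rel R ts, M, N, SM, SN, f, v, h => by
      letI := SM; letI := SN
      show Structure.RelMap R _
      have h2 : (fun i => Term.realize (fun i => f.toFun (v i)) (ts i))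
          = ⇑f ∘ (fun i => Term.realize v (ts i)) := by
        funext i
        show Term.realize (⇑f ∘ v) (ts i) = _
        rw [HomClass.realize_term]
        rfl
      rw [h2, StrongHomClass.map_rel]
      exact h
  | _, .not φ, M, N, SM, SN, f, v, h => by
      intro P SP g hP
      exact h P SP (g.comp f) hP
  | _, .disj Φ, M, N, SM, SN, f, v, h => by
      obtain ⟨i, hi⟩ := h
      exact ⟨i, forces_persist (Φ i) SM SN f v hi⟩
  | _, .conj Φ, M, N, SM, SN, f, v, h => by
      intro P SP g i
      exact h P SP (g.comp f) i
  | _, .ex φ, M, N, SM, SN, f, v, h => by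
      obtain ⟨b, hb⟩ := h
      refine ⟨f.toFun b, ?_⟩
      have := forces_persist φ SM SN f _ hb
      convert this using 1
      funext i
      refine Fin.lastCases ?_ (fun j => ?_) i <;> simp [Fin.snoc_castSucc]
  | _, .all φ, M, N, SM, SN, f, v, h => by
      intro P SP g b
      exact h P SP (g.comp f) b

/-- Realization of a formula only depends on the values of the valuation on free variables. -/
lemma realize_congr_freeVar {α : Type u} {M : Type u} [L.Structure M] [DecidableEq α]
    (θ : L.Formula α) {u w : α → M} (h : ∀ c ∈ θ.freeVarFinset, u c = w c) :
    θ.Realize u ↔ θ.Realize w := by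
  have hu := BoundedFormula.realize_restrictFreeVar' (M := M)
    (φ := θ) (s := (↑θ.freeVarFinset : Set α)) Set.Subset.rfl (v := u) (xs := default)
  have hw := BoundedFormula.realize_restrictFreeVar' (M := M)
    (φ := θ) (s := (↑θ.freeVarFinset : Set α)) Set.Subset.rfl (v := w) (xs := default)
  have : (u ∘ ((↑) : (↑θ.freeVarFinset : Set α) → α))
      = (w ∘ ((↑) : (↑θ.freeVarFinset : Set α) → α)) := by
    funext c
    exact h c.1 (by exact_mod_cast c.2)
  unfold Formula.Realize
  rw [← hu, ← hw, this]

/-- Key finite-satisfiability step: finitely many formulas realized (with parameters) in `C`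
can be realized in `B`, compatibly with the elementary embeddings `f` and `g` over `A`. -/
lemma exists_map_of_finset {A B C : Type u} [Nonempty C] (SA : L.Structure A)
    (SB : L.Structure B) (SC : L.Structure C)
    (f : ElemEmb A B SA SB) (g : ElemEmb A C SA SC)
    (Θ : Finset (L.Formula C)) (hΘ : ∀ θ ∈ Θ, letI := SC; θ.Realize (id : C → C)) :
    ∃ h : C → B, (∀ a, h (g.toFun a) = f.toFun a) ∧
      ∀ θ ∈ Θ, letI := SB; θ.Realize h := by
  letI := SA; letI := SB; letI := SC
  classical
  set s : Finset C := Θ.biUnion (fun θ => θ.freeVarFinset) with hs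
  set r : C → A ⊕ (Option ↥(↑s : Set C)) := fun c =>
    if hc : ∃ a, g.toFun a = c then Sum.inl hc.choose
    else if hc' : c ∈ s then Sum.inr (some ⟨c, hc'⟩) else Sum.inr none with hr
  set χ : L.Formula C := Θ.toList.foldr (· ⊓ ·) ⊤ with hχ
  have hfoldr : ∀ {M : Type u} [L.Structure M] (w : C → M),
      χ.Realize w ↔ ∀ θ ∈ Θ, θ.Realize w := by
    intro M _ w
    rw [hχ]
    unfold Formula.Realize
    rw [BoundedFormula.realize_foldr_inf]
    constructor
    · intro h θ hθ; exact h θ (Finset.mem_toList.2 hθ)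
    · intro h θ hθ; exact h θ (Finset.mem_toList.1 hθ)
  have hragree : ∀ (M : Type u) (_ : L.Structure M) (vB : A → M) (wB : Option ↥(↑s : Set C) → M)
      (c : C), c ∈ s → (hc : ∃ a, g.toFun a = c) →
        Sum.elim vB wB (r c) = vB hc.choose := by
    intro M _ vB wB c _ hc
    simp only [hr, dif_pos hc, Sum.elim_inl]
  -- `χ` is realized in `C` by the identity valuation
  have hχC : χ.Realize (id : C → C) := (hfoldr _).2 hΘ
  -- hence the existential closure over non-`A` variables is realized in `C` at `g`
  have hiex : ((χ.relabel r).iExs (Option ↥(↑s : Set C))).Realize (⇑g : A → C) := by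
    rw [Formula.realize_iExs]
    simp only [Formula.realize_relabel]
    refine ⟨fun o => o.elim (Classical.arbitrary C) Subtype.val, ?_⟩
    rw [hfoldr]
    intro θ hθ
    rw [realize_congr_freeVar (w := id)]
    · exact hΘ θ hθ
    · intro c hcθ
      have hcs : c ∈ s := Finset.mem_biUnion.2 ⟨θ, hθ, hcθ⟩
      by_cases hc : ∃ a, g.toFun a = c
      · simp only [Function.comp_apply, hr, dif_pos hc, Sum.elim_inl]
        exact hc.choose_spec
      · simp only [Function.comp_apply, hr, dif_neg hc, dif_pos hcs, Sum.elim_inr, Option.elim_some, id_eq]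
  -- transfer along `g` down to `A`, then along `f` up to `B`
  have hA : ((χ.relabel r).iExs (Option ↥(↑s : Set C))).Realize (id : A → A) := (g.map_formula ((χ.relabel r).iExs (Option ↥(↑s : Set C))) id).1 hiex
  have hB : ((χ.relabel r).iExs (Option ↥(↑s : Set C))).Realize (⇑f : A → B) := (f.map_formula ((χ.relabel r).iExs (Option ↥(↑s : Set C))) id).2 hA
  rw [Formula.realize_iExs] at hB
  simp only [Formula.realize_relabel] at hB
  obtain ⟨w, hw⟩ := hB
  refine ⟨fun c => Sum.elim (⇑f) w (r c), ?_, ?_⟩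
  · intro a
    have hc : ∃ a', g.toFun a' = g.toFun a := ⟨a, rfl⟩
    have : hc.choose = a := g.injective hc.choose_spec
    simp only [hr, dif_pos hc, Sum.elim_inl, this]
    rfl
  · intro θ hθ
    exact (hfoldr _).1 hw θ hθ

/-- An elementary embedding between empty structures constructed from sentence transfer. -/
noncomputable def elemEmbOfIsEmpty {B C : Type u} (SB : L.Structure B) (SC : L.Structure C)
    [IsEmpty C] (heq : letI := SB; letI := SC; C ≅[L] B) : ElemEmb C B SC SB := by
  letI := SB; letI := SC
  refine ⟨fun c => isEmptyElim c, ?_⟩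
  intro n φ x
  match n with
  | 0 =>
      have h : ∀ (M : Type u) (_ : L.Structure M) (y : Fin 0 → M),
          φ.Realize y ↔ (φ.relabel (Fin.elim0 : Fin 0 → Empty)).Realize
            (default : Empty → M) := by
        intro M _ y
        rw [Formula.realize_relabel]
        constructor <;> intro h' <;> [convert h'; convert h'] <;>
          · funext i; exact i.elim0
      rw [h B _ _, h C _ _]
      exact (heq.realize_sentence _).symm
  | n + 1 => exact isEmptyElim (x 0)

/-- The elementary amalgamation theorem. -/
lemma exists_amalgam {A B C : Type u} (SA : L.Structure A) (SB : L.Structure B)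
    (SC : L.Structure C) (f : ElemEmb A B SA SB) (g : ElemEmb A C SA SC) :
    ∃ (P : Type u) (SP : L.Structure P) (eB : ElemEmb B P SB SP) (eC : ElemEmb C P SC SP),
      ∀ a, eB.toFun (f.toFun a) = eC.toFun (g.toFun a) := by
  letI := SA; letI := SB; letI := SC
  classical
  have heq : C ≅[L] B :=
    g.elementarilyEquivalent.symm.trans f.elementarilyEquivalent
  by_cases hne : Nonempty C
  case neg =>
    -- all three structures are empty; use `B` itself as the amalgam
    haveI : IsEmpty C := not_nonempty_iff.1 hne
    haveI : IsEmpty A := ⟨fun a => IsEmpty.false (g.toFun a)⟩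
    exact ⟨B, SB, ElementaryEmbedding.refl L B, elemEmbOfIsEmpty SB SC heq,
      fun a => isEmptyElim a⟩
  haveI : Nonempty C := hne
  haveI : Nonempty B := heq.nonempty_iff.1 hne
  -- the common language with constants for `B` and `C`
  set φB : L[[B]] →ᴸ L[[B ⊕ C]] := L.lhomWithConstantsMap (Sum.inl : B → B ⊕ C) with hφB
  set φC : L[[C]] →ᴸ L[[B ⊕ C]] := L.lhomWithConstantsMap (Sum.inr : C → B ⊕ C) with hφC
  set E : L[[B ⊕ C]].Theory := Set.range (fun a : A =>
    Term.bdEqual (Constants.term (L.con (Sum.inl (f.toFun a))))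
      (Constants.term (L.con (Sum.inr (g.toFun a))))) with hE
  set T : L[[B ⊕ C]].Theory :=
    (φB.onTheory (L.elementaryDiagram B) ∪ E) ∪ φC.onTheory (L.elementaryDiagram C) with hT
  have hsat : T.IsSatisfiable := by
    have hdir : T = ⋃ (t : Finset ↥(L.elementaryDiagram C)),
        ((φB.onTheory (L.elementaryDiagram B) ∪ E) ∪
          (φC.onSentence '' (Subtype.val '' (↑t : Set ↥(L.elementaryDiagram C))))) := by
      ext σ
      simp only [hT, Set.mem_iUnion, Set.mem_union]
      constructor
      · rintro (h | h)
        · exact ⟨∅, Or.inl h⟩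
        · obtain ⟨ψ, hψ, rfl⟩ := h
          exact ⟨{⟨ψ, hψ⟩}, Or.inr ⟨ψ, ⟨⟨ψ, hψ⟩, by simp, rfl⟩, rfl⟩⟩
      · rintro ⟨t, (h | h)⟩
        · exact Or.inl h
        · obtain ⟨ψ, ⟨⟨ψ', hψ'⟩, _, rfl⟩, rfl⟩ := h
          exact Or.inr ⟨ψ', hψ', rfl⟩
    rw [hdir]
    rw [Theory.isSatisfiable_directed_union_iff]
    swap
    · apply Monotone.directed_le
      intro t₁ t₂ ht
      exact Set.union_subset_union_right _
        (Set.image_mono (Set.image_mono (Finset.coe_subset.2 ht)))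
    intro t
    -- the finitely many `L`-formulas with parameters from `C` to be realized
    set Θ : Finset (L.Formula C) := t.image (fun ψ => Formula.equivSentence.symm ψ.val)
      with hΘdef
    have hreal : ∀ θ ∈ Θ, θ.Realize (id : C → C) := by
      intro θ hθ
      obtain ⟨ψ, hψt, rfl⟩ := Finset.mem_image.1 hθ
      have hmem : C ⊨ ψ.val := Language.mem_completeTheory.1 ψ.2
      exact (Formula.realize_equivSentence_symm_con C ψ.val).2 hmem
    obtain ⟨h, hcomm, hhΘ⟩ := exists_map_of_finset SA SB SC f g Θ hreal
    -- interpret the new constants in `B`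
    letI SBC : (constantsOn (B ⊕ C)).Structure B := constantsOn.structure (Sum.elim id h)
    letI SCB : (constantsOn C).Structure B := constantsOn.structure h
    haveI hexp1 : (LHom.constantsOnMap (Sum.inl : B → B ⊕ C)).IsExpansionOn B :=
      constantsOnMap_isExpansionOn (M := B) rfl
    haveI hexp2 : (LHom.constantsOnMap (Sum.inr : C → B ⊕ C)).IsExpansionOn B :=
      constantsOnMap_isExpansionOn (M := B) rfl
    haveI hexpB' : φB.IsExpansionOn B :=
      LHom.sumMap_isExpansionOn (LHom.id L) (LHom.constantsOnMap (Sum.inl : B → B ⊕ C)) B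
    haveI hexpC' : φC.IsExpansionOn B :=
      LHom.sumMap_isExpansionOn (LHom.id L) (LHom.constantsOnMap (Sum.inr : C → B ⊕ C)) B
    have h1 : B ⊨ φB.onTheory (L.elementaryDiagram B) :=
      (φB.onTheory_model _).2 (Theory.model_iff_subset_completeTheory.2 (subset_refl _))
    have h2 : B ⊨ E := by
      rw [Theory.model_iff]
      rintro σ ⟨a, rfl⟩
      have : (id : B → B) (f.toFun a) = h (g.toFun a) := (hcomm a).symm
      simp only [Sentence.Realize, Formula.Realize, BoundedFormula.realize_bdEqual,
        Term.realize_constants]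
      exact this
    have h3 : B ⊨ (φC.onSentence '' (Subtype.val '' (↑t : Set ↥(L.elementaryDiagram C)))) := by
      rw [Theory.model_iff]
      rintro σ ⟨ψ, ⟨ψ', hψ't, rfl⟩, rfl⟩
      rw [LHom.realize_onSentence]
      rw [← Formula.realize_equivSentence_symm_con]
      exact hhΘ _ (Finset.mem_image_of_mem _ hψ't)
    haveI : B ⊨ ((φB.onTheory (L.elementaryDiagram B) ∪ E) ∪
        (φC.onSentence '' (Subtype.val '' (↑t : Set ↥(L.elementaryDiagram C))))) :=
      (h1.union h2).union h3
    exact Theory.Model.isSatisfiable B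
  obtain ⟨Mod⟩ := hsat
  letI SM' : L[[B ⊕ C]].Structure Mod := Mod.struc
  haveI hModT : Mod ⊨ T := Mod.is_model
  letI SM : L.Structure Mod := (L.lhomWithConstants (B ⊕ C)).reduct Mod
  letI SMB : L[[B]].Structure Mod := φB.reduct Mod
  letI SMC : L[[C]].Structure Mod := φC.reduct Mod
  haveI hexpB : (L.lhomWithConstants B).IsExpansionOn Mod :=
    ⟨fun _ _ => rfl, fun _ _ => rfl⟩
  haveI hexpC : (L.lhomWithConstants C).IsExpansionOn Mod :=
    ⟨fun _ _ => rfl, fun _ _ => rfl⟩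
  haveI hMB : Mod ⊨ L.elementaryDiagram B :=
    (φB.onTheory_model _).1 (hModT.mono (subset_trans Set.subset_union_left
      Set.subset_union_left))
  haveI hMC : Mod ⊨ L.elementaryDiagram C :=
    (φC.onTheory_model _).1 (hModT.mono Set.subset_union_right)
  refine ⟨Mod, SM, ElementaryEmbedding.ofModelsElementaryDiagram L B Mod,
    ElementaryEmbedding.ofModelsElementaryDiagram L C Mod, fun a => ?_⟩
  have hmem : Term.bdEqual (Constants.term (L.con (Sum.inl (f.toFun a))))
      (Constants.term (L.con (Sum.inr (g.toFun a)))) ∈ T :=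
    Or.inl (Or.inr ⟨a, rfl⟩)
  have hre := Theory.realize_sentence_of_mem (M := Mod) T hmem
  simp only [Sentence.Realize, Formula.Realize, BoundedFormula.realize_bdEqual,
    Term.realize_constants] at hre
  exact hre

end Aux

/-- Weak forcing (`A ⊩* ψ := A ⊩ ¬¬ψ`) is invariant under elementary extension:
if `A ⪯ B` then `A ⊩* ψ(ā)` iff `B ⊩* ψ(ā)`. -/
theorem stmt11 {L : FirstOrder.Language.{u, u}} {n : ℕ} (ψ : InfForm L n)
    {A B : Type u} (SA : L.Structure A) (SB : L.Structure B) (f : ElemEmb A B SA SB)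
    (v : Fin n → A) :
    WForces ψ A SA v ↔ WForces ψ B SB (fun i => f.toFun (v i)) := by
  constructor
  · intro h
    exact forces_persist ψ.not.not SA SB f v h
  · intro hB N SN g hforce
    have h2 : ¬ Forces ψ.not B SB (fun i => f.toFun (v i)) :=
      hB B SB (FirstOrder.Language.ElementaryEmbedding.refl L B)
    rw [show Forces ψ.not B SB (fun i => f.toFun (v i)) =
        ∀ (P : Type u) (SP : L.Structure P) (k : ElemEmb B P SB SP),
          ¬ Forces ψ P SP (fun i => k.toFun (f.toFun (v i))) from rfl] at h2
    push_neg at h2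
    obtain ⟨P, SP, k, hk⟩ := h2
    obtain ⟨Q, SQ, eN, eP, hcomm⟩ := exists_amalgam SA SN SP g (k.comp f)
    have hQ : Forces ψ Q SQ (fun i => eP.toFun (k.toFun (f.toFun (v i)))) :=
      forces_persist ψ SP SQ eP _ hk
    have hQ' : Forces ψ Q SQ (fun i => eN.toFun (g.toFun (v i))) := by
      have he : (fun i => eN.toFun (g.toFun (v i)))
          = (fun i => eP.toFun (k.toFun (f.toFun (v i)))) :=
        funext fun i => hcomm (v i)
      rw [he]
      exact hQ
    exact hforce Q SQ eN hQ'

end InfinitaryForcing
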